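/- Let T be a spherically homogeneous rooted tree and let G ≤ Aut(T) be a weakly branch group. Then for every vertex v of T and every k ∈ ℕ, the k-th iterated derived subgroup rist_G^{(k)}(v) of the rigid stabiliser rist_G(v) is nontrivial. -/

import Mathlib

open scoped Pointwise

/-! ## Spherically homogeneous rooted trees -/

/-- A vertex of the spherically homogeneous rooted tree over the shifted sequence of
alphabets `i ↦ A (i + k)`: a finite word whose `j`-th letter belongs to `A (j + k)`. -/
def Vtx (A : ℕ → Type*) (k : ℕ) : Type _ :=
  {l : List (Σ i, A i) // ∀ j (h : j < l.length), (l[j]'h).1 = j + k}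

namespace Vtx

variable {A : ℕ → Type*}

/-- The length of a vertex (the distance to the root). -/
def len {k : ℕ} (v : Vtx A k) : ℕ := v.1.length

/-- The prefix relation on vertices. -/
def Pre {k : ℕ} (v w : Vtx A k) : Prop := v.1 <+: w.1

/-- The `n`-th level of the tree: all vertices of length `n`. -/
def level (A : ℕ → Type*) (k : ℕ) (n : ℕ) : Set (Vtx A k) := {v | v.len = n}

/-- Concatenation of a vertex of the tree with a word over the shifted alphabets. -/
def cat (v : Vtx A 0) (w : Vtx A v.len) : Vtx A 0 :=
  ⟨v.1 ++ w.1, by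
    intro j h
    by_cases hj : j < v.1.length
    · rw [List.getElem_append_left hj]
      exact v.2 j hj
    · push_neg at hj
      rw [List.getElem_append_right hj]
      have h2 : j - v.1.length < w.1.length := by
        have h3 := h
        simp only [List.length_append] at h3
        omega
      exact (w.2 (j - v.1.length) h2).trans
        (by show j - v.1.length + v.1.length = j + 0; omega)⟩

/-- Deleting a prefix of length `n` from a vertex. -/
def dropPre (n : ℕ) (u : Vtx A 0) : Vtx A n :=
  ⟨u.1.drop n, by
    intro j h
    have h' : n + j < u.1.length := by
      simp only [List.length_drop] at h
      omega
    rw [List.getElem_drop]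
    exact (u.2 (n + j) h').trans (by omega)⟩

end Vtx

/-- The full automorphism group of the rooted tree `T_k`:
bijections of the vertex set preserving word length and the prefix relation. -/
def treeAut (A : ℕ → Type*) (k : ℕ) : Subgroup (Equiv.Perm (Vtx A k)) where
  carrier := {f | (∀ v, (f v).len = v.len) ∧ ∀ v w, Vtx.Pre (f v) (f w) ↔ Vtx.Pre v w}
  one_mem' := ⟨fun _ => rfl, fun _ _ => Iff.rfl⟩
  mul_mem' := by
    rintro f g ⟨hf1, hf2⟩ ⟨hg1, hg2⟩
    constructor
    · intro v
      have : (f * g) v = f (g v) := rfl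
      rw [this]
      exact (hf1 (g v)).trans (hg1 v)
    · intro v w
      have e1 : (f * g) v = f (g v) := rfl
      have e2 : (f * g) w = f (g w) := rfl
      rw [e1, e2]
      exact (hf2 (g v) (g w)).trans (hg2 v w)
  inv_mem' := by
    rintro f ⟨hf1, hf2⟩
    constructor
    · intro v
      conv_rhs => rw [← (show f (f⁻¹ v) = v by simp)]
      exact (hf1 _).symm
    · intro v w
      conv_rhs => rw [← (show f (f⁻¹ v) = v by simp), ← (show f (f⁻¹ w) = w by simp)]
      exact (hf2 _ _).symm

variable {A : ℕ → Type*}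

/-- The stabiliser `St_H(v)` of a vertex `v` in a subgroup `H ≤ Perm`. -/
def vstab {k : ℕ} (H : Subgroup (Equiv.Perm (Vtx A k))) (v : Vtx A k) :
    Subgroup (Equiv.Perm (Vtx A k)) where
  carrier := {g | g ∈ H ∧ g v = v}
  one_mem' := ⟨H.one_mem, rfl⟩
  mul_mem' := by
    rintro a b ⟨ha, ha'⟩ ⟨hb, hb'⟩
    refine ⟨H.mul_mem ha hb, ?_⟩
    have : (a * b) v = a (b v) := rfl
    rw [this, hb', ha']
  inv_mem' := by
    rintro a ⟨ha, ha'⟩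
    refine ⟨H.inv_mem ha, ?_⟩
    conv_lhs => rw [← ha']
    exact (show a⁻¹ (a v) = v by simp)

/-- The stabiliser `St_H(n)` of the `n`-th level. -/
def levStab {k : ℕ} (H : Subgroup (Equiv.Perm (Vtx A k))) (n : ℕ) :
    Subgroup (Equiv.Perm (Vtx A k)) where
  carrier := {g | g ∈ H ∧ ∀ v : Vtx A k, v.len = n → g v = v}
  one_mem' := ⟨H.one_mem, fun _ _ => rfl⟩
  mul_mem' := by
    rintro a b ⟨ha, ha'⟩ ⟨hb, hb'⟩
    refine ⟨H.mul_mem ha hb, fun v hv => ?_⟩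
    have : (a * b) v = a (b v) := rfl
    rw [this, hb' v hv, ha' v hv]
  inv_mem' := by
    rintro a ⟨ha, ha'⟩
    refine ⟨H.inv_mem ha, fun v hv => ?_⟩
    conv_lhs => rw [← ha' v hv]
    exact (show a⁻¹ (a v) = v by simp)

/-- The rigid stabiliser `rist_H(v)`: elements of `H` fixing every vertex that does not
have `v` as a prefix. -/
def rist {k : ℕ} (H : Subgroup (Equiv.Perm (Vtx A k))) (v : Vtx A k) :
    Subgroup (Equiv.Perm (Vtx A k)) where
  carrier := {g | g ∈ H ∧ ∀ w : Vtx A k, ¬ Vtx.Pre v w → g w = w}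
  one_mem' := ⟨H.one_mem, fun _ _ => rfl⟩
  mul_mem' := by
    rintro a b ⟨ha, ha'⟩ ⟨hb, hb'⟩
    refine ⟨H.mul_mem ha hb, fun w hw => ?_⟩
    have : (a * b) w = a (b w) := rfl
    rw [this, hb' w hw, ha' w hw]
  inv_mem' := by
    rintro a ⟨ha, ha'⟩
    refine ⟨H.inv_mem ha, fun w hw => ?_⟩
    conv_lhs => rw [← ha' w hw]
    exact (show a⁻¹ (a w) = w by simp)

/-- The rigid level stabiliser `rist_H(n)`: the subgroup generated by the rigid
stabilisers of the vertices on the `n`-th level. -/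
def ristLev {k : ℕ} (H : Subgroup (Equiv.Perm (Vtx A k))) (n : ℕ) :
    Subgroup (Equiv.Perm (Vtx A k)) :=
  ⨆ v ∈ {v : Vtx A k | v.len = n}, rist H v

/-- `G` acts spherically transitively: transitively on every level of the tree. -/
def SphTrans {k : ℕ} (G : Subgroup (Equiv.Perm (Vtx A k))) : Prop :=
  ∀ v w : Vtx A k, v.len = w.len → ∃ g ∈ G, g v = w

/-- `G ≤ Aut(T_k)` is a branch group. -/
structure IsBranch {k : ℕ} (G : Subgroup (Equiv.Perm (Vtx A k))) : Prop where
  le_aut : G ≤ treeAut A k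
  trans : SphTrans G
  rist_fi : ∀ n : ℕ, (ristLev G n).relIndex G ≠ 0

/-- `G ≤ Aut(T_k)` is a weakly branch group. -/
structure IsWeaklyBranch {k : ℕ} (G : Subgroup (Equiv.Perm (Vtx A k))) : Prop where
  le_aut : G ≤ treeAut A k
  trans : SphTrans G
  rist_nt : ∀ n : ℕ, ristLev G n ≠ ⊥

/-! ## Sections -/

namespace Vtx

theorem dropPre_cat (v : Vtx A 0) (w : Vtx A v.len) : dropPre v.len (cat v w) = w := by
  apply Subtype.ext
  show (v.1 ++ w.1).drop v.1.length = w.1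
  exact List.drop_left

theorem pre_cat (v : Vtx A 0) (w : Vtx A v.len) : Pre v (cat v w) := ⟨w.1, rfl⟩

theorem cat_dropPre {v u : Vtx A 0} (h : Pre v u) : cat v (dropPre v.len u) = u := by
  apply Subtype.ext
  show v.1 ++ u.1.drop v.1.length = u.1
  obtain ⟨t, ht⟩ := h
  rw [← ht, List.drop_left]

end Vtx

/-- The section map `φ_v` at the level of plain functions. -/
def secFun (v : Vtx A 0) (f : Equiv.Perm (Vtx A 0)) : Vtx A v.len → Vtx A v.len :=
  fun w => Vtx.dropPre v.len (f (Vtx.cat v w))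

theorem secFun_key {v : Vtx A 0} {f : Equiv.Perm (Vtx A 0)}
    (hf : f ∈ vstab (treeAut A 0) v) (w : Vtx A v.len) :
    Vtx.cat v (secFun v f w) = f (Vtx.cat v w) := by
  obtain ⟨⟨hlen, hpre⟩, hfix⟩ := hf
  apply Vtx.cat_dropPre
  have := (hpre v (Vtx.cat v w))
  rw [hfix] at this
  exact this.mpr (Vtx.pre_cat v w)

theorem secFun_mul {v : Vtx A 0} {f g : Equiv.Perm (Vtx A 0)}
    (hf : f ∈ vstab (treeAut A 0) v) (hg : g ∈ vstab (treeAut A 0) v) :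
    secFun v (f * g) = secFun v f ∘ secFun v g := by
  funext w
  show Vtx.dropPre v.len ((f * g) (Vtx.cat v w)) = Vtx.dropPre v.len (f (Vtx.cat v (secFun v g w)))
  rw [secFun_key hg w]
  rfl

theorem secFun_one (v : Vtx A 0) : secFun v (1 : Equiv.Perm (Vtx A 0)) = id := by
  funext w
  show Vtx.dropPre v.len ((1 : Equiv.Perm (Vtx A 0)) (Vtx.cat v w)) = w
  rw [Equiv.Perm.one_apply]
  exact Vtx.dropPre_cat v w

theorem secFun_bij {v : Vtx A 0} {f : Equiv.Perm (Vtx A 0)}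
    (hf : f ∈ vstab (treeAut A 0) v) : Function.Bijective (secFun v f) := by
  rw [Function.bijective_iff_has_inverse]
  refine ⟨secFun v f⁻¹, fun w => ?_, fun w => ?_⟩
  · have h1 := congrFun (secFun_mul (inv_mem hf) hf) w
    rw [inv_mul_cancel, secFun_one] at h1
    exact h1.symm
  · have h1 := congrFun (secFun_mul hf (inv_mem hf)) w
    rw [mul_inv_cancel, secFun_one] at h1
    exact h1.symm

open Classical in
noncomputable def secPerm (v : Vtx A 0) (f : Equiv.Perm (Vtx A 0)) :
    Equiv.Perm (Vtx A v.len) :=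
  if h : Function.Bijective (secFun v f) then Equiv.ofBijective _ h else 1

theorem secPerm_coe {v : Vtx A 0} {f : Equiv.Perm (Vtx A 0)}
    (hf : f ∈ vstab (treeAut A 0) v) : ⇑(secPerm v f) = secFun v f := by
  unfold secPerm
  rw [dif_pos (secFun_bij hf)]
  rfl

/-- The section homomorphism `φ_v : St_{Aut(T)}(v) → Perm(T_{|v|})`. -/
noncomputable def phiHom (v : Vtx A 0) :
    ↥(vstab (treeAut A 0) v) →* Equiv.Perm (Vtx A v.len) where
  toFun f := secPerm v f.1
  map_one' := by
    apply Equiv.ext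
    intro w
    show secPerm v (1 : Equiv.Perm (Vtx A 0)) w = (1 : Equiv.Perm (Vtx A v.len)) w
    rw [secPerm_coe (one_mem (vstab (treeAut A 0) v)), secFun_one]
    rfl
  map_mul' := by
    intro f g
    apply Equiv.ext
    intro w
    show secPerm v (f.1 * g.1) w = (secPerm v f.1 * secPerm v g.1) w
    have e : (secPerm v f.1 * secPerm v g.1) w = secPerm v f.1 (secPerm v g.1 w) := rfl
    rw [e, secPerm_coe (mul_mem f.2 g.2), secPerm_coe f.2, secPerm_coe g.2,
      secFun_mul f.2 g.2]
    rfl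

/-- The image `φ_v(St_H(v)) ≤ Perm(T_{|v|})` of the stabiliser of `v` in `H` under the
section homomorphism at `v`; for `H ≤ G ≤ Aut(T)` this is the subgroup written `H_v`. -/
noncomputable def secSub (v : Vtx A 0) (H : Subgroup (Equiv.Perm (Vtx A 0))) :
    Subgroup (Equiv.Perm (Vtx A v.len)) :=
  Subgroup.map (phiHom v) ((vstab H v).subgroupOf (vstab (treeAut A 0) v))

/-- A subgroup `H ≤ G` has finite bi-index if the set of double cosets
`{HgH : g ∈ G}` is finite. -/
def FiniteBiIndex {G : Type*} [Group G] (H : Subgroup G) : Prop :=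
  {S : Set G | ∃ g : G, S = (H : Set G) * {g} * (H : Set G)}.Finite

/-- The set of double cosets of a subgroup `H` of a group `M` with representatives in a
subgroup `G` of `M`; for `H ≤ G` this is the set of double cosets `H\G/H`. -/
def doubleCosets {M : Type*} [Group M] (G H : Subgroup M) : Set (Set M) :=
  {S : Set M | ∃ g ∈ G, S = (H : Set M) * {g} * (H : Set M)}

/-- The pro-normal closure of a subgroup `H ≤ G`: the intersection of the subsets `HN`,
over all nontrivial normal subgroups `N` of `G`. -/
def pronormalClosure {G : Type*} [Group G] (H : Subgroup G) : Subgroup G where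
  carrier := ⋂ N ∈ {N : Subgroup G | N.Normal ∧ N ≠ ⊥}, (H : Set G) * (N : Set G)
  one_mem' := by
    simp only [Set.mem_iInter]
    rintro N ⟨hN, -⟩
    exact ⟨1, H.one_mem, 1, N.one_mem, mul_one 1⟩
  mul_mem' := by
    intro a b ha hb
    simp only [Set.mem_iInter] at ha hb ⊢
    rintro N hN
    obtain ⟨h₁, hh₁, n₁, hn₁, rfl⟩ := ha N hN
    obtain ⟨h₂, hh₂, n₂, hn₂, rfl⟩ := hb N hN
    refine ⟨h₁ * h₂, H.mul_mem hh₁ hh₂, (h₂⁻¹ * n₁ * h₂) * n₂, ?_, by group⟩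
    refine N.mul_mem ?_ hn₂
    have := hN.1.conj_mem n₁ hn₁ h₂⁻¹
    simpa using this
  inv_mem' := by
    intro a ha
    simp only [Set.mem_iInter] at ha ⊢
    rintro N hN
    obtain ⟨h, hh, n, hn, rfl⟩ := ha N hN
    refine ⟨h⁻¹, H.inv_mem hh, h * n⁻¹ * h⁻¹, hN.1.conj_mem n⁻¹ (N.inv_mem hn) h, by group⟩

/-- A subgroup `H ≤ G` is quasi-prodense if its pro-normal closure has finite index. -/
def QuasiProdense {G : Type*} [Group G] (H : Subgroup G) : Prop :=
  (pronormalClosure H).index ≠ 0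

/-- `K` is a normal subgroup of the subgroup `H` (both subgroups of an ambient group). -/
def NormalIn {M : Type*} [Group M] (H K : Subgroup M) : Prop :=
  K ≤ H ∧ ∀ h ∈ H, ∀ k ∈ K, h * k * h⁻¹ ∈ K

/-- `K` is a subnormal subgroup of the subgroup `H`. -/
def SubnormalIn {M : Type*} [Group M] (H K : Subgroup M) : Prop :=
  ∃ (m : ℕ) (c : ℕ → Subgroup M), c 0 = K ∧ c m = H ∧ ∀ i < m, NormalIn (c (i + 1)) (c i)

/-- The iterated derived subgroups of a subgroup. -/
def iterDerived {M : Type*} [Group M] (H : Subgroup M) : ℕ → Subgroup M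
  | 0 => H
  | (k + 1) => ⁅iterDerived H k, iterDerived H k⁆

lemma permApplyInvSelf {α : Type*} (f : Equiv.Perm α) (x : α) : f (f⁻¹ x) = x :=
  Equiv.apply_symm_apply f x

lemma iterDerived_le {M : Type*} [Group M] (H : Subgroup M) (k : ℕ) :
    iterDerived H k ≤ H := by
  induction k with
  | zero => exact le_rfl
  | succ k ih =>
    have : iterDerived H (k + 1) = ⁅iterDerived H k, iterDerived H k⁆ := rfl
    rw [this]
    refine le_trans ?_ ih
    exact Subgroup.commutator_le.mpr fun g hg h hh =>
      Subgroup.mul_mem _ (Subgroup.mul_mem _ (Subgroup.mul_mem _ hg hh)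
        (Subgroup.inv_mem _ hg)) (Subgroup.inv_mem _ hh)

lemma iterDerived_mono {M : Type*} [Group M] {H K : Subgroup M} (h : H ≤ K) (k : ℕ) :
    iterDerived H k ≤ iterDerived K k := by
  induction k with
  | zero => exact h
  | succ k ih => exact Subgroup.commutator_mono ih ih

lemma rist_mono {H : Subgroup (Equiv.Perm (Vtx A 0))} {v u : Vtx A 0}
    (h : Vtx.Pre v u) : rist H u ≤ rist H v := by
  rintro g ⟨hgH, hfix⟩
  exact ⟨hgH, fun w hw => hfix w fun hp => hw (h.trans hp)⟩

lemma rist_ne_bot (G : Subgroup (Equiv.Perm (Vtx A 0))) (hG : IsWeaklyBranch G)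
    (v : Vtx A 0) : rist G v ≠ ⊥ := by
  have h1 : ristLev G v.len ≠ ⊥ := hG.rist_nt v.len
  have h2 : ∃ w : Vtx A 0, w.len = v.len ∧ rist G w ≠ ⊥ := by
    by_contra hc
    push_neg at hc
    apply h1
    unfold ristLev
    rw [iSup₂_eq_bot]
    exact fun w hw => hc w hw
  obtain ⟨w, hwlen, hwnb⟩ := h2
  rw [Subgroup.ne_bot_iff_exists_ne_one] at hwnb ⊢
  obtain ⟨⟨h, hhR⟩, hne⟩ := hwnb
  have hne' : h ≠ 1 := fun he => hne (Subtype.ext he)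
  obtain ⟨hhG, hhfix⟩ := hhR
  obtain ⟨g, hgG, hgw⟩ := hG.trans w v hwlen
  obtain ⟨hlen, hpre⟩ := hG.le_aut hgG
  refine ⟨⟨g * h * g⁻¹, ?_, ?_⟩, ?_⟩
  · exact G.mul_mem (G.mul_mem hgG hhG) (G.inv_mem hgG)
  · intro x hx
    have hfix : h (g⁻¹ x) = g⁻¹ x := by
      apply hhfix
      intro hp
      have := (hpre w (g⁻¹ x)).mpr hp
      rw [hgw, permApplyInvSelf] at this
      exact hx this
    show g (h (g⁻¹ x)) = x
    rw [hfix, permApplyInvSelf]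
  · intro he
    apply hne'
    have he' : g * h * g⁻¹ = 1 := Subtype.ext_iff.mp he
    have : h = g⁻¹ * (g * h * g⁻¹) * g := by group
    rw [he'] at this
    rw [this]; group

lemma perm_exists_moved {α : Type*} {g : Equiv.Perm α} (hg : g ≠ 1) :
    ∃ x, g x ≠ x := by
  by_contra hc
  push_neg at hc
  exact hg (Equiv.ext fun x => hc x)

open scoped commutatorElement

/-- In a weakly branch group, every iterated derived subgroup of every rigid vertex
stabiliser is nontrivial. -/
theorem iterDerived_rist_ne_bot
    (A : ℕ → Type*) [∀ i, Fintype (A i)] (hA : ∀ i, 2 ≤ Fintype.card (A i))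
    (G : Subgroup (Equiv.Perm (Vtx A 0))) (hG : IsWeaklyBranch G)
    (v : Vtx A 0) (k : ℕ) :
    iterDerived (rist G v) k ≠ ⊥ := by
  induction k generalizing v with
  | zero => exact rist_ne_bot G hG v
  | succ k ih =>
    -- pick a nontrivial g in the k-th derived subgroup of rist G v
    rw [Subgroup.ne_bot_iff_exists_ne_one]
    obtain ⟨⟨g, hgD⟩, hgne⟩ := Subgroup.ne_bot_iff_exists_ne_one.mp (ih v)
    have hgne' : g ≠ 1 := fun he => hgne (Subtype.ext he)
    have hgR : g ∈ rist G v := iterDerived_le _ k hgD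
    obtain ⟨hgG, hgfix⟩ := hgR
    obtain ⟨hlen, hpre⟩ := hG.le_aut hgG
    -- g moves some vertex u, necessarily below v
    obtain ⟨u, hu⟩ := perm_exists_moved hgne'
    have hvu : Vtx.Pre v u := by
      by_contra hp
      exact hu (hgfix u hp)
    -- pick a nontrivial h in the k-th derived subgroup of rist G u
    obtain ⟨⟨h, hhD'⟩, hhne⟩ := Subgroup.ne_bot_iff_exists_ne_one.mp (ih u)
    have hhne' : h ≠ 1 := fun he => hhne (Subtype.ext he)
    have hhR : h ∈ rist G u := iterDerived_le _ k hhD'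
    have hhD : h ∈ iterDerived (rist G v) k :=
      iterDerived_mono (rist_mono hvu) k hhD'
    obtain ⟨hhG, hhfix⟩ := hhR
    -- h moves some vertex w below u
    obtain ⟨w, hw⟩ := perm_exists_moved hhne'
    have huw : Vtx.Pre u w := by
      by_contra hp
      exact hw (hhfix w hp)
    set w' := h⁻¹ w with hw'def
    have hww' : w' ≠ w := by
      intro he
      apply hw
      conv_lhs => rw [← he]
      exact permApplyInvSelf h w
    have huw' : Vtx.Pre u w' := by
      by_contra hp
      apply hww'
      have := hhfix w' hp
      rw [hw'def, permApplyInvSelf] at this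
      rw [hw'def]
      exact this.symm
    -- the subtrees at u and g u are disjoint
    have hgu_ne : g u ≠ u := hu
    have hnotpre : ¬ Vtx.Pre (g u) w' := by
      intro hp
      apply hgu_ne
      have hlen_eq : (g u).len = u.len := hlen u
      have hpre' : (g u).1 <+: u.1 :=
        List.prefix_of_prefix_length_le hp huw' (le_of_eq hlen_eq)
      exact Subtype.ext (hpre'.eq_of_length hlen_eq)
    have hfix2 : h (g⁻¹ w') = g⁻¹ w' := by
      apply hhfix
      intro hp
      have := (hpre u (g⁻¹ w')).mpr hp
      rw [permApplyInvSelf] at this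
      exact hnotpre this
    -- the commutator ⁅g, h⁆ is nontrivial
    have hc : ⁅g, h⁆ ≠ 1 := by
      intro he
      have hcw : ⁅g, h⁆ w = w := by rw [he]; rfl
      have : ⁅g, h⁆ w = w' := by
        show g (h (g⁻¹ (h⁻¹ w))) = w'
        rw [← hw'def, hfix2, permApplyInvSelf]
      rw [this] at hcw
      exact hww' hcw
    have hcmem : ⁅g, h⁆ ∈ iterDerived (rist G v) (k + 1) := by
      have : iterDerived (rist G v) (k + 1) =
          ⁅iterDerived (rist G v) k, iterDerived (rist G v) k⁆ := rfl
      rw [this]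
      exact Subgroup.commutator_mem_commutator hgD hhD
    exact ⟨⟨⁅g, h⁆, hcmem⟩, fun he => hc (Subtype.ext_iff.mp he)⟩
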